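/- Let n be an even natural number and let P be a set of n points in ℝ^2 in general position (no three points of P are collinear). Let G be the halving edge graph of P. Then every vertex of G has odd degree. -/

import Mathlib

noncomputable section

/-- The 2×2 determinant of two vectors in the plane. -/
def det2 (u v : ℝ × ℝ) : ℝ := u.1 * v.2 - u.2 * v.1

/-- A finite point set in the plane is in general position if no three of its points
are collinear. -/
def GenPos (P : Finset (ℝ × ℝ)) : Prop :=
  ∀ a ∈ P, ∀ b ∈ P, ∀ c ∈ P, a ≠ b → a ≠ c → b ≠ c → det2 (b - a) (c - a) ≠ 0

/-- `{a, b}` is a halving edge of `P`: `a, b` are distinct points of `P` and the line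
through `a` and `b` has exactly `(|P| - 2)/2` points of `P` strictly on each side
(equivalently, the number of `p ∈ P \ {a, b}` with `det (b - a) (p - a) > 0` is
`(|P| - 2)/2`). -/
def IsHalvingEdge (P : Finset (ℝ × ℝ)) (a b : ℝ × ℝ) : Prop :=
  a ∈ P ∧ b ∈ P ∧ a ≠ b ∧
    ((P \ {a, b}).filter (fun p => 0 < det2 (b - a) (p - a))).card = (P.card - 2) / 2

/-- The degree of a point `v` in the halving edge graph of `P`: the number of halving
edges incident to `v`. -/
def halvingDegree (P : Finset (ℝ × ℝ)) (v : ℝ × ℝ) : ℕ :=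
  Set.ncard {w : ℝ × ℝ | IsHalvingEdge P v w}

/-- The number of halving edges of `P` (edges of the halving edge graph). -/
def halvingEdgeCount (P : Finset (ℝ × ℝ)) : ℕ :=
  Set.ncard {e : Sym2 (ℝ × ℝ) | ∃ a b, e = s(a, b) ∧ IsHalvingEdge P a b}

/-- The number of crossings of the halving edge graph of `P`: unordered pairs of
halving edges `{a, b}`, `{x, y}` with `{a, b} ∩ {x, y} = ∅` whose open segments
intersect. -/
def crossingCount (P : Finset (ℝ × ℝ)) : ℕ :=
  Set.ncard {c : Sym2 (Sym2 (ℝ × ℝ)) | ∃ a b x y,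
    c = s(s(a, b), s(x, y)) ∧ IsHalvingEdge P a b ∧ IsHalvingEdge P x y ∧
    ({a, b} : Set (ℝ × ℝ)) ∩ {x, y} = ∅ ∧
    (openSegment ℝ a b ∩ openSegment ℝ x y).Nonempty}

end

open Finset

private lemma walk_parity (m : ℕ) (d : ℕ → ℤ) (h2 : Even (d 0))
    (hstep : ∀ i, i < m → d (i+1) = d i + 2 ∨ d (i+1) = d i - 2)
    (hend : d m = 2 - d 0) :
    Odd (((range m).filter (fun i => d i + d (i+1) = 2)).card) := by
  have key : ∀ k, k ≤ m → Even (d k) ∧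
      (Odd (((range k).filter (fun i => d i + d (i+1) = 2)).card) ↔ ¬(d 0 ≤ 0 ↔ d k ≤ 0)) := by
    intro k hk
    induction k with
    | zero => exact ⟨h2, by simp⟩
    | succ k ih =>
      obtain ⟨hev, hiff⟩ := ih (Nat.le_of_succ_le hk)
      have hstepk := hstep k hk
      have hev' : Even (d (k+1)) := by
        rcases hstepk with h | h <;> rw [h] <;>
          [exact hev.add (by decide); exact hev.sub (by decide)]
      constructor
      · exact hev'
      · rw [range_add_one, filter_insert]
        by_cases hc : d k + d (k+1) = 2
        · rw [if_pos hc, card_insert_of_notMem (by simp)]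
          have hflip : ¬(d k ≤ 0 ↔ d (k+1) ≤ 0) := by
            obtain ⟨a, ha⟩ := hev
            rcases hstepk with h | h <;> omega
          rw [Nat.odd_add_one, hiff]
          omega
        · rw [if_neg hc]
          have hsame : (d k ≤ 0 ↔ d (k+1) ≤ 0) := by
            obtain ⟨a, ha⟩ := hev
            rcases hstepk with h | h <;> omega
          rw [hiff]
          omega
  obtain ⟨hev, hiff⟩ := key m le_rfl
  rw [hiff]
  obtain ⟨a, ha⟩ := h2
  omega

noncomputable section AuxGeo


attribute [local instance] Classical.propDecidable

private def upv (z : ℝ × ℝ) : Prop := 0 < z.2 ∨ (z.2 = 0 ∧ 0 < z.1)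

private noncomputable def nvec (z : ℝ × ℝ) : ℝ × ℝ := if upv z then z else -z

private noncomputable def keyf (z : ℝ × ℝ) : WithBot ℝ :=
  if z.2 = 0 then ⊥ else ((-z.1 / z.2 : ℝ) : WithBot ℝ)

private lemma det2_neg_left (z w : ℝ × ℝ) : det2 (-z) w = -det2 z w := by
  simp [det2]; ring

private lemma det2_neg_right (z w : ℝ × ℝ) : det2 z (-w) = -det2 z w := by
  simp [det2]; ring

private lemma upv_nvec {z : ℝ × ℝ} (hz : z ≠ 0) : upv (nvec z) := by
  unfold nvec
  split_ifs with h
  · exact h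
  · have hz' : z.1 ≠ 0 ∨ z.2 ≠ 0 := by
      by_contra hc
      push_neg at hc
      exact hz (Prod.ext hc.1 hc.2)
    unfold upv at h ⊢
    push_neg at h
    simp only [Prod.snd_neg, Prod.fst_neg]
    rcases lt_trichotomy z.2 0 with h2 | h2 | h2
    · left; linarith
    · right
      refine ⟨by rw [h2]; ring, ?_⟩
      have h1 := h.2 h2
      have : z.1 ≠ 0 := by tauto
      have : z.1 < 0 := lt_of_le_of_ne h1 this
      linarith
    · exact absurd h2 (not_lt.mpr h.1)

private lemma det2_nvec (z w : ℝ × ℝ) :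
    det2 (nvec z) (nvec w) =
      (if upv z then (1:ℝ) else -1) * ((if upv w then (1:ℝ) else -1) * det2 z w) := by
  unfold nvec
  split_ifs <;> simp [det2_neg_left, det2_neg_right]

private lemma keyf_lt {a b : ℝ × ℝ} (ha : upv a) (hb : upv b) (hne : det2 a b ≠ 0) :
    (0 < det2 a b ↔ keyf a < keyf b) := by
  unfold keyf
  by_cases ha2 : a.2 = 0
  · by_cases hb2 : b.2 = 0
    · exfalso; apply hne; unfold det2; rw [ha2, hb2]; ring
    · have ha1 : 0 < a.1 := by
        rcases ha with h | h
        · exact absurd ha2 (ne_of_gt h)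
        · exact h.2
      have hb2' : 0 < b.2 := by
        rcases hb with h | h
        · exact h
        · exact absurd h.1 hb2
      rw [if_pos ha2, if_neg hb2]
      constructor
      · intro _; exact WithBot.bot_lt_coe _
      · intro _
        unfold det2; rw [ha2]
        have : 0 < a.1 * b.2 := mul_pos ha1 hb2'
        linarith
  · have ha2' : 0 < a.2 := by
      rcases ha with h | h
      · exact h
      · exact absurd h.1 ha2
    by_cases hb2 : b.2 = 0
    · have hb1 : 0 < b.1 := by
        rcases hb with h | h
        · exact absurd hb2 (ne_of_gt h)
        · exact h.2
      rw [if_neg ha2, if_pos hb2]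
      constructor
      · intro hd
        exfalso
        unfold det2 at hd; rw [hb2] at hd
        nlinarith
      · intro hlt
        exact absurd hlt (by simp)
    · have hb2' : 0 < b.2 := by
        rcases hb with h | h
        · exact h
        · exact absurd h.1 hb2
      rw [if_neg ha2, if_neg hb2, WithBot.coe_lt_coe, div_lt_div_iff₀ ha2' hb2']
      unfold det2
      constructor
      · intro h; nlinarith
      · intro h; nlinarith


private lemma card_filter_fin (m : ℕ) (p : ℕ → Prop) [DecidablePred p] :
    (univ.filter (fun j : Fin m => p ↑j)).card = ((range m).filter p).card := by
  rw [Finset.card_filter, Finset.card_filter, ← Fin.sum_univ_eq_sum_range]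

end AuxGeo



attribute [local instance] Classical.propDecidable

set_option maxHeartbeats 2000000 in
/-- every vertex of the halving edge graph has odd degree. -/
theorem halvingDegree_odd (n : ℕ) (hn : Even n) (P : Finset (ℝ × ℝ))
    (hcard : P.card = n) (hgp : GenPos P) :
    ∀ v ∈ P, Odd (halvingDegree P v) := by
  intro v hv
  classical
  have hn2 : 2 ≤ n := by
    obtain ⟨t, ht⟩ := hn
    have hp : 0 < P.card := Finset.card_pos.mpr ⟨v, hv⟩
    omega
  set m := n - 1 with hm
  have hmodd : m % 2 = 1 := by obtain ⟨t, ht⟩ := hn; omega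
  set Q := P.erase v with hQ
  have hQcard : Q.card = m := by rw [hQ, Finset.card_erase_of_mem hv, hcard]
  have hQne : ∀ w ∈ Q, w ≠ v := fun w hw => Finset.ne_of_mem_erase hw
  have hQP : ∀ w ∈ Q, w ∈ P := fun w hw => Finset.mem_of_mem_erase hw
  have hu0 : ∀ w ∈ Q, w - v ≠ 0 := fun w hw => sub_ne_zero_of_ne (hQne w hw)
  have hdet : ∀ a ∈ Q, ∀ b ∈ Q, a ≠ b → det2 (a - v) (b - v) ≠ 0 := by
    intro a ha b hb hab
    exact hgp v hv a (hQP a ha) b (hQP b hb) (Ne.symm (hQne a ha)) (Ne.symm (hQne b hb)) hab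
  set κ : (ℝ × ℝ) → WithBot ℝ := fun w => keyf (nvec (w - v)) with hκ
  have hκne : ∀ a ∈ Q, ∀ b ∈ Q, a ≠ b →
      det2 (nvec (a - v)) (nvec (b - v)) ≠ 0 := by
    intro a ha b hb hab
    rw [det2_nvec]
    have h0 := hdet a ha b hb hab
    split_ifs <;> simpa using h0
  have hκlt : ∀ a ∈ Q, ∀ b ∈ Q, a ≠ b →
      (0 < det2 (nvec (a - v)) (nvec (b - v)) ↔ κ a < κ b) := by
    intro a ha b hb hab
    exact keyf_lt (upv_nvec (hu0 a ha)) (upv_nvec (hu0 b hb)) (hκne a ha b hb hab)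
  have hdet2_swap : ∀ z w : ℝ × ℝ, det2 z w = - det2 w z := by
    intro z w; simp [det2]; ring
  have hκinj : Set.InjOn κ Q := by
    intro a ha b hb hab
    by_contra hne
    have h0 := hκne a ha b hb hne
    rcases lt_trichotomy (det2 (nvec (a - v)) (nvec (b - v))) 0 with h | h | h
    · have h1 : 0 < det2 (nvec (b - v)) (nvec (a - v)) := by
        rw [hdet2_swap]; linarith
      have := (hκlt b hb a ha (Ne.symm hne)).mp h1
      rw [hab] at this
      exact absurd this (lt_irrefl _)
    · exact h0 h
    · have := (hκlt a ha b hb hne).mp h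
      rw [hab] at this
      exact absurd this (lt_irrefl _)
  set K := Q.image κ with hKdef
  have hKcard : K.card = m := by rw [hKdef, Finset.card_image_of_injOn hκinj, hQcard]
  set ι := K.orderIsoOfFin hKcard with hι
  have hpick : ∀ i : Fin m, ∃ w, w ∈ Q ∧ κ w = ↑(ι i) := by
    intro i
    obtain ⟨w, hw, hww⟩ := Finset.mem_image.mp (ι i).2
    exact ⟨w, hw, hww⟩
  choose pk hpkQ hpkκ using hpick
  have pkinj : Function.Injective pk := by
    intro i j h
    have h1 := hpkκ i
    rw [h, hpkκ j] at h1
    exact ι.injective (Subtype.coe_injective h1.symm)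
  have pksurj : ∀ w ∈ Q, ∃ i, pk i = w := by
    intro w hw
    refine ⟨ι.symm ⟨κ w, Finset.mem_image_of_mem κ hw⟩, ?_⟩
    have h1 := hpkκ (ι.symm ⟨κ w, Finset.mem_image_of_mem κ hw⟩)
    rw [OrderIso.apply_symm_apply] at h1
    exact hκinj (hpkQ _) hw h1
  have hκmono : ∀ i j : Fin m, (κ (pk i) < κ (pk j) ↔ i < j) := by
    intro i j
    rw [hpkκ, hpkκ]
    exact Iff.trans (by exact_mod_cast Iff.rfl) ι.lt_iff_lt
  set εn : ℕ → Bool := fun k => if h : k < m then decide (upv (pk ⟨k, h⟩ - v)) else false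
    with hεdef
  have hεn : ∀ j : Fin m, εn ↑j = decide (upv (pk j - v)) := by
    intro j
    simp only [hεdef]
    rw [dif_pos j.isLt]
  have horient : ∀ i j : Fin m, i ≠ j →
      (0 < det2 (pk i - v) (pk j - v) ↔
        (if εn ↑i = εn ↑j then (i : ℕ) < ↑j else (j : ℕ) < ↑i)) := by
    intro i j hij
    have hne : pk i ≠ pk j := fun h => hij (pkinj h)
    have hd0 := hdet _ (hpkQ i) _ (hpkQ j) hne
    have hik : (0 < det2 (nvec (pk i - v)) (nvec (pk j - v)) ↔ (i : ℕ) < ↑j) :=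
      ((hκlt _ (hpkQ i) _ (hpkQ j) hne).trans (hκmono i j)).trans Fin.lt_def
    have hvne : (i : ℕ) ≠ ↑j := fun h => hij (Fin.ext h)
    have hnvp : ∀ z : ℝ × ℝ, upv z → nvec z = z := fun z h => if_pos h
    have hnvn : ∀ z : ℝ × ℝ, ¬ upv z → nvec z = -z := fun z h => if_neg h
    by_cases hi : upv (pk i - v) <;> by_cases hj : upv (pk j - v)
    · rw [hnvp _ hi, hnvp _ hj] at hik
      rw [if_pos (by rw [hεn i, hεn j, decide_eq_decide]; exact iff_of_true hi hj)]
      exact hik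
    · rw [hnvp _ hi, hnvn _ hj, det2_neg_right] at hik
      rw [if_neg (by rw [hεn i, hεn j, decide_eq_decide]; exact fun h => hj (h.mp hi))]
      constructor
      · intro h
        have h1 : ¬ ((i : ℕ) < ↑j) := fun hlt => by
          have := hik.mpr hlt; linarith
        omega
      · intro h
        rcases lt_trichotomy (det2 (pk i - v) (pk j - v)) 0 with h' | h' | h'
        · exfalso
          have : (i : ℕ) < ↑j := hik.mp (by linarith)
          omega
        · exact absurd h' hd0
        · exact h'
    · rw [hnvn _ hi, hnvp _ hj, det2_neg_left] at hik
      rw [if_neg (by rw [hεn i, hεn j, decide_eq_decide]; exact fun h => hi (h.mpr hj))]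
      constructor
      · intro h
        have h1 : ¬ ((i : ℕ) < ↑j) := fun hlt => by
          have := hik.mpr hlt; linarith
        omega
      · intro h
        rcases lt_trichotomy (det2 (pk i - v) (pk j - v)) 0 with h' | h' | h'
        · exfalso
          have : (i : ℕ) < ↑j := hik.mp (by linarith)
          omega
        · exact absurd h' hd0
        · exact h'
    · rw [hnvn _ hi, hnvn _ hj, det2_neg_left, det2_neg_right, neg_neg] at hik
      rw [if_pos (by rw [hεn i, hεn j, decide_eq_decide]; exact iff_of_false hi hj)]
      exact hik
  -- the counting machinery
  set Cr : ℕ → ℕ := fun k => ((range k).filter (fun j => εn j = true)).card with hCrdef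
  set F := Cr m with hFdef
  set dd : ℕ → ℤ := fun k => 2*(F:ℤ) + 2*(k:ℤ) - 4*((Cr k : ℕ) : ℤ) - ((m:ℤ) - 1) with hdd
  have hCs : ∀ k, Cr (k+1) = Cr k + (if εn k = true then 1 else 0) := by
    intro k
    simp only [hCrdef]
    rw [range_add_one, filter_insert]
    split_ifs with h
    · rw [card_insert_of_notMem (by simp)]
    · simp
  have hstep : ∀ k, k < m → dd (k+1) = dd k + 2 ∨ dd (k+1) = dd k - 2 := by
    intro k _
    cases hε : εn k
    · left
      have hc : Cr (k+1) = Cr k := by rw [hCs k, hε]; simp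
      simp only [hdd, hc]; push_cast; ring
    · right
      have hc : Cr (k+1) = Cr k + 1 := by rw [hCs k, hε]; simp
      simp only [hdd, hc]; push_cast; ring
  have hCr0 : Cr 0 = 0 := by simp [hCrdef]
  have hend : dd m = 2 - dd 0 := by
    simp only [hdd, hCr0, ← hFdef]
    push_cast
    ring
  have hev0 : Even (dd 0) := by
    have h0 : dd 0 = 2*(F:ℤ) - ((m:ℤ) - 1) := by simp [hdd, hCr0]
    rw [Int.even_iff, h0]
    omega
  -- the per-vertex correspondence
  have hcorr : ∀ i : Fin m, (IsHalvingEdge P v (pk i) ↔ dd ↑i + dd (↑i+1) = 2) := by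
    intro i
    have hiQ := hpkQ i
    have hsd : P \ {v, pk i} = Q.erase (pk i) := by
      ext x
      simp only [Finset.mem_sdiff, Finset.mem_erase, Finset.mem_insert, Finset.mem_singleton, hQ]
      tauto
    have h1 : IsHalvingEdge P v (pk i) ↔
        ((Q.erase (pk i)).filter (fun p => 0 < det2 (pk i - v) (p - v))).card = (n-2)/2 := by
      unfold IsHalvingEdge
      rw [hsd, hcard]
      have hp1 : pk i ∈ P := hQP _ hiQ
      have hp2 : v ≠ pk i := (hQne _ hiQ).symm
      tauto
    have h2 : ((Q.erase (pk i)).filter (fun p => 0 < det2 (pk i - v) (p - v))).card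
        = (univ.filter (fun j : Fin m => ¬ j = i ∧ 0 < det2 (pk i - v) (pk j - v))).card := by
      refine (Finset.card_bij (fun j _ => pk j) ?_ ?_ ?_).symm
      · intro j hj
        simp only [mem_filter, mem_univ, true_and] at hj
        simp only [mem_filter, Finset.mem_erase]
        exact ⟨⟨fun h => hj.1 (pkinj h), hpkQ j⟩, hj.2⟩
      · intro j1 _ j2 _ he
        exact pkinj he
      · intro w hw
        simp only [mem_filter, Finset.mem_erase] at hw
        obtain ⟨⟨hwne, hwQ⟩, hwdet⟩ := hw
        obtain ⟨j, hj⟩ := pksurj w hwQ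
        refine ⟨j, ?_, hj⟩
        simp only [mem_filter, mem_univ, true_and]
        exact ⟨fun h => hwne (by rw [← hj, h]), by rw [hj]; exact hwdet⟩
    have h3 : (univ.filter (fun j : Fin m => ¬ j = i ∧ 0 < det2 (pk i - v) (pk j - v))).card
        = (univ.filter (fun j : Fin m =>
            if εn ↑i = εn ↑j then (i:ℕ) < ↑j else (↑j:ℕ) < ↑i)).card := by
      congr 1
      apply Finset.filter_congr
      intro j _
      by_cases hji : j = i
      · subst hji
        simp
      · rw [horient i j (fun h => hji h.symm)]
        simp [hji]
    -- the two counting identities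
    set A := ((range m).filter (fun k => if εn k = true then (i:ℕ) < k else k < (i:ℕ))).card
      with hA
    set B := ((range m).filter (fun k => if εn k = true then k < (i:ℕ) else (i:ℕ) < k)).card
      with hB
    set Cm' := ((range m).filter (fun k => εn k = true ∧ k < (i:ℕ))).card with hCm'
    have HC : Cr ↑i = Cm' := by
      simp only [hCrdef, hCm']
      congr 1
      ext k
      simp only [mem_filter, mem_range]
      constructor
      · rintro ⟨h1, h2⟩
        exact ⟨h1.trans i.isLt, h2, h1⟩
      · rintro ⟨_, h2, h3⟩
        exact ⟨h3, h2⟩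
    have hisum : ((range m).filter (fun k => k < (i:ℕ))).card = (i:ℕ) := by
      have : (range m).filter (fun k => k < (i:ℕ)) = range (i:ℕ) := by
        ext k
        simp only [mem_filter, mem_range]
        constructor
        · rintro ⟨_, h2⟩; exact h2
        · intro h; exact ⟨h.trans i.isLt, h⟩
      rw [this, card_range]
    have hesum : ((range m).filter (fun k => k = (i:ℕ) ∧ εn k = true)).card
        = (if εn ↑i = true then 1 else 0) := by
      have : (range m).filter (fun k => k = (i:ℕ) ∧ εn k = true)
          = if εn ↑i = true then {((i:ℕ))} else ∅ := by
        split_ifs with h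
        · ext k
          simp only [mem_filter, mem_range, mem_singleton]
          constructor
          · rintro ⟨_, h1, _⟩; exact h1
          · rintro rfl; exact ⟨i.isLt, rfl, h⟩
        · ext k
          simp only [mem_filter, mem_range, notMem_empty, iff_false, not_and]
          rintro _ rfl
          exact fun hc => h hc
      rw [this]
      split_ifs <;> simp
    have IdA0 : 2*A + 2*((range m).filter (fun k => k = (i:ℕ) ∧ εn k = true)).card + 4*Cm'
        = 2*F + 2*((range m).filter (fun k => k < (i:ℕ))).card := by
      rw [hA, hCm', hFdef, hCrdef]
      simp only [Finset.card_filter]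
      rw [Finset.mul_sum, Finset.mul_sum, Finset.mul_sum, Finset.mul_sum, Finset.mul_sum,
          ← Finset.sum_add_distrib, ← Finset.sum_add_distrib, ← Finset.sum_add_distrib]
      apply Finset.sum_congr rfl
      intro k hk
      by_cases h1 : εn k = true <;> by_cases h3 : k = (i:ℕ) <;>
        by_cases h2 : k < (i:ℕ) <;> simp [h1, h2, h3] <;> omega
    have hone : ((range m).filter (fun k => k = (i:ℕ))).card = 1 := by
      have he : (range m).filter (fun k => k = (i:ℕ)) = {((i:ℕ))} := by
        ext k
        simp only [mem_filter, mem_range, mem_singleton]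
        constructor
        · rintro ⟨_, h1⟩; exact h1
        · rintro rfl; exact ⟨i.isLt, rfl⟩
      rw [he, card_singleton]
    have IdAB0 : A + B + ((range m).filter (fun k => k = (i:ℕ))).card = m := by
      conv_rhs => rw [← card_range m]
      rw [hA, hB]
      simp only [Finset.card_filter]
      rw [Finset.card_eq_sum_ones (range m), ← Finset.sum_add_distrib, ← Finset.sum_add_distrib]
      apply Finset.sum_congr rfl
      intro k hk
      rw [mem_range] at hk
      by_cases h1 : εn k = true <;> by_cases h3 : k = (i:ℕ) <;>
        by_cases h2 : k < (i:ℕ) <;> simp [h1, h2, h3] <;> omega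
    have hCsi := hCs ↑i
    have hiLt := i.isLt
    cases hb : εn ↑i
    · have h4 : (univ.filter (fun j : Fin m =>
            if εn ↑i = εn ↑j then (i:ℕ) < ↑j else (↑j:ℕ) < ↑i)).card = B := by
        rw [hB, ← card_filter_fin m (fun k => if εn k = true then k < (i:ℕ) else (i:ℕ) < k)]
        congr 1
        apply Finset.filter_congr
        intro j _
        cases hj : εn ↑j <;> simp [hb, hj]
      rw [h1, h2, h3, h4]
      rw [if_neg (by simp [hb])] at hesum
      rw [hb, if_neg (by decide)] at hCsi
      simp only [hdd]
      omega
    · have h4 : (univ.filter (fun j : Fin m =>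
            if εn ↑i = εn ↑j then (i:ℕ) < ↑j else (↑j:ℕ) < ↑i)).card = A := by
        rw [hA, ← card_filter_fin m (fun k => if εn k = true then (i:ℕ) < k else k < (i:ℕ))]
        congr 1
        apply Finset.filter_congr
        intro j _
        cases hj : εn ↑j <;> simp [hb, hj]
      rw [h1, h2, h3, h4]
      rw [if_pos hb] at hesum
      rw [hb, if_pos rfl] at hCsi
      simp only [hdd]
      omega
  -- final assembly
  have hset : {w : ℝ × ℝ | IsHalvingEdge P v w}
      = ↑(Q.filter (fun w => IsHalvingEdge P v w)) := by
    ext w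
    simp only [Set.mem_setOf_eq, Finset.coe_filter, Set.mem_setOf_eq]
    constructor
    · intro h
      exact ⟨Finset.mem_erase.mpr ⟨h.2.2.1.symm, h.2.1⟩, h⟩
    · intro h
      exact h.2
  have e1 : halvingDegree P v = (Q.filter (fun w => IsHalvingEdge P v w)).card := by
    rw [halvingDegree, hset, Set.ncard_coe_finset]
  have e2 : (Q.filter (fun w => IsHalvingEdge P v w)).card
      = (univ.filter (fun i : Fin m => IsHalvingEdge P v (pk i))).card := by
    refine (Finset.card_bij (fun j _ => pk j) ?_ ?_ ?_).symm
    · intro j hj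
      simp only [mem_filter, mem_univ, true_and] at hj
      simp only [mem_filter]
      exact ⟨hpkQ j, hj⟩
    · intro j1 _ j2 _ he
      exact pkinj he
    · intro w hw
      simp only [mem_filter] at hw
      obtain ⟨j, hj⟩ := pksurj w hw.1
      refine ⟨j, ?_, hj⟩
      simp only [mem_filter, mem_univ, true_and]
      rw [hj]
      exact hw.2
  have e3 : (univ.filter (fun i : Fin m => IsHalvingEdge P v (pk i))).card
      = (univ.filter (fun i : Fin m => dd ↑i + dd (↑i+1) = 2)).card := by
    congr 1
    exact Finset.filter_congr (fun i _ => by rw [hcorr i])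
  rw [e1, e2, e3, card_filter_fin m (fun k => dd k + dd (k+1) = 2)]
  exact walk_parity m dd hev0 hstep hend
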